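/- Let ABC be a hyperbolic triangle with sides a, b, c opposite to angles α, β, γ respectively, and suppose α > π/2. Then π - α < β + γ·cosh a. -/
import Mathlib


open Real

set_option maxHeartbeats 1000000 in
/-- Let `ABC` be a hyperbolic triangle with sides `a, b, c` opposite to angles `α, β, γ`,
with `α > π/2`.  (The angles of a hyperbolic triangle are positive, sum to less than `π`,
and satisfy the dual cosine law `cos α = -cos β cos γ + sin β sin γ cosh a`.)
Then `π - α < β + γ·cosh a`. -/
theorem obtuse_hyperbolic_triangle_angle_bound
    (a α β γ : ℝ) (ha : 0 < a) (hβ : 0 < β) (hγ : 0 < γ)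
    (hsum : α + β + γ < π)
    (hdual : Real.cos α = -Real.cos β * Real.cos γ + Real.sin β * Real.sin γ * Real.cosh a)
    (hα : π / 2 < α) (hα' : α < π) :
    π - α < β + γ * Real.cosh a := by
  set T := Real.cosh a with hT
  set δ := π - α with hδdef
  set u := β + γ with hu
  set s := δ - u with hsdef
  have hπ := Real.pi_pos
  have hδ2 : δ < π / 2 := by simp only [hδdef]; linarith
  have hδ0 : 0 < δ := by simp only [hδdef]; linarith
  have huδ : u < δ := by simp only [hδdef, hu]; linarith
  have hs : 0 < s := by simp only [hsdef]; linarith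
  have hu0 : 0 < u := by simp only [hu]; linarith
  have hβ2 : β < π / 2 := by simp only [hu] at huδ; linarith
  have hγ2 : γ < π / 2 := by simp only [hu] at huδ; linarith
  have hsinβ : 0 < Real.sin β := Real.sin_pos_of_pos_of_lt_pi hβ (by linarith)
  have hsinγ : 0 < Real.sin γ := Real.sin_pos_of_pos_of_lt_pi hγ (by linarith)
  have hsinu : 0 < Real.sin u := Real.sin_pos_of_pos_of_lt_pi hu0 (by linarith)
  -- cos δ = cos β cos γ - sin β sin γ * T
  have hcosδ : Real.cos δ = Real.cos β * Real.cos γ - Real.sin β * Real.sin γ * T := by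
    have : Real.cos δ = -Real.cos α := by rw [hδdef, Real.cos_pi_sub]
    rw [this, hdual]; ring
  have hcosu : Real.cos u = Real.cos β * Real.cos γ - Real.sin β * Real.sin γ :=
    Real.cos_add β γ
  have heq : Real.sin β * Real.sin γ * (T - 1) = Real.cos u - Real.cos δ := by
    rw [hcosu, hcosδ]; ring
  -- key inequality 1 : s * sin u < cos u - cos δ
  set m := (u + δ) / 2 with hm
  have hm0 : 0 < m := by simp only [hm]; linarith
  have hm2 : m < π / 2 := by simp only [hm]; linarith
  have hsinm : 0 < Real.sin m := Real.sin_pos_of_pos_of_lt_pi hm0 (by linarith)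
  have hcosm : 0 < Real.cos m := Real.cos_pos_of_mem_Ioo ⟨by linarith, hm2⟩
  have hs2 : 0 < s / 2 := by linarith
  have hs2' : s / 2 < π / 2 := by linarith
  have hsins2 : 0 < Real.sin (s / 2) := Real.sin_pos_of_pos_of_lt_pi hs2 (by linarith)
  have hcoss2 : 0 < Real.cos (s / 2) := Real.cos_pos_of_mem_Ioo ⟨by linarith, hs2'⟩
  have htan : s / 2 < Real.tan (s / 2) := Real.lt_tan hs2 hs2'
  have htan' : s / 2 * Real.cos (s / 2) < Real.sin (s / 2) := by
    rw [Real.tan_eq_sin_div_cos] at htan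
    calc s / 2 * Real.cos (s / 2) < Real.sin (s / 2) / Real.cos (s / 2) * Real.cos (s / 2) := by
          exact mul_lt_mul_of_pos_right htan hcoss2
      _ = Real.sin (s / 2) := by field_simp
  have hdiff : Real.cos u - Real.cos δ = 2 * Real.sin m * Real.sin (s / 2) := by
    rw [Real.cos_sub_cos]
    have h1 : (u - δ) / 2 = -(s / 2) := by simp only [hsdef]; ring
    rw [h1, Real.sin_neg, ← hm]; ring
  have hsinu_eq : Real.sin u = Real.sin m * Real.cos (s / 2) - Real.cos m * Real.sin (s / 2) := by
    have : u = m - s / 2 := by simp only [hm, hsdef]; ring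
    rw [this, Real.sin_sub]
  have h1 : s * Real.sin u < Real.cos u - Real.cos δ := by
    rw [hdiff, hsinu_eq]
    nlinarith [mul_pos hsinm hsins2, mul_pos (mul_pos hs hcosm) hsins2,
      mul_lt_mul_of_pos_left htan' hsinm]
  -- key inequality 2 : sin β * sin γ < γ * sin u
  have h2 : Real.sin β * Real.sin γ < γ * Real.sin u := by
    have hsγ : Real.sin γ < γ := Real.sin_lt hγ
    have hsβu : Real.sin β < Real.sin u :=
      Real.sin_lt_sin_of_lt_of_le_pi_div_two (by linarith) (by linarith) (by simp only [hu]; linarith)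
    calc Real.sin β * Real.sin γ < Real.sin β * γ := mul_lt_mul_of_pos_left hsγ hsinβ
      _ ≤ γ * Real.sin β := (mul_comm _ _).le
      _ < γ * Real.sin u := mul_lt_mul_of_pos_left hsβu hγ
  -- combine
  have hP : 0 < Real.sin β * Real.sin γ := mul_pos hsinβ hsinγ
  have key : s * (Real.sin β * Real.sin γ) <
      γ * (T - 1) * (Real.sin β * Real.sin γ) := by
    have hA : γ * (s * Real.sin u) < γ * (Real.cos u - Real.cos δ) :=
      mul_lt_mul_of_pos_left h1 hγ
    have hB : Real.sin β * Real.sin γ * s < γ * Real.sin u * s :=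
      mul_lt_mul_of_pos_right h2 hs
    nlinarith [heq]
  have goal' : s < γ * (T - 1) := lt_of_mul_lt_mul_right key (le_of_lt hP)
  have : δ < β + γ * T := by simp only [hsdef, hu] at goal'; linarith
  simpa [hδdef] using this
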